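/- An α-Stieltjes right-nonnegative definite sequence (s_j)_{j=0}^{κ} is α-Stieltjes right-positive definite (belongs to K^{>}_{q,κ,α}) if and only if the matrix s_0^{[k,α]} is nonsingular for every 0 ≤ k ≤ κ; in that case s_0^{[k,α]} is positive Hermitian for all k. -/

import Mathlib

open Matrix BigOperators ComplexOrder

def IsMP {m n : Type*} [Fintype m] [Fintype n] (A : Matrix m n ℂ) (B : Matrix n m ℂ) : Prop :=
  A * B * A = A ∧ B * A * B = B ∧ (A * B)ᴴ = A * B ∧ (B * A)ᴴ = B * A

open Classical in
noncomputable def mp {m n : Type*} [Fintype m] [Fintype n] (A : Matrix m n ℂ) : Matrix n m ℂ :=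
  if h : ∃ B, IsMP A B then h.choose else 0

noncomputable def recip {p q : ℕ} (s : ℕ → Matrix (Fin p) (Fin q) ℂ) :
    ℕ → Matrix (Fin q) (Fin p) ℂ
  | 0 => mp (s 0)
  | (j+1) => -(mp (s 0) * ∑ l : Fin (j+1), s (j+1 - l.val) * recip s l.val)
termination_by j => j
decreasing_by exact l.isLt

noncomputable def shiftA {p q : ℕ} (α : ℂ) (s : ℕ → Matrix (Fin p) (Fin q) ℂ) :
    ℕ → Matrix (Fin p) (Fin q) ℂ
  | 0 => s 0
  | (j+1) => (-α) • s j + s (j+1)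

noncomputable def recipA {p q : ℕ} (α : ℂ) (s : ℕ → Matrix (Fin p) (Fin q) ℂ) :
    ℕ → Matrix (Fin q) (Fin p) ℂ :=
  recip (shiftA α s)

/-- the first α-Schur transform. -/
noncomputable def schur1 {p q : ℕ} (α : ℂ) (s : ℕ → Matrix (Fin p) (Fin q) ℂ) :
    ℕ → Matrix (Fin p) (Fin q) ℂ :=
  fun j => s 0 * (-(recipA α s (j + 1))) * s 0

/-- block Hankel matrix H_n = [s_{j+k}]_{j,k=0}^{n}. -/
def hankelMat {p q : ℕ} (s : ℕ → Matrix (Fin p) (Fin q) ℂ) (n : ℕ) :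
    Matrix (Fin (n + 1) × Fin p) (Fin (n + 1) × Fin q) ℂ :=
  Matrix.of fun jk lm => s (jk.1.val + lm.1.val) jk.2 lm.2

/-- block Hankel matrix K_n = [s_{j+k+1}]_{j,k=0}^{n}. -/
def hankelKMat {p q : ℕ} (s : ℕ → Matrix (Fin p) (Fin q) ℂ) (n : ℕ) :
    Matrix (Fin (n + 1) × Fin p) (Fin (n + 1) × Fin q) ℂ :=
  Matrix.of fun jk lm => s (jk.1.val + lm.1.val + 1) jk.2 lm.2

/-- the class K^{≥}_{q,κ,α} of α-Stieltjes right-nonnegative definite sequences. -/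
def Kgg {q : ℕ} (α : ℝ) (κ : ℕ∞) (s : ℕ → Matrix (Fin q) (Fin q) ℂ) : Prop :=
  (∀ n : ℕ, ((2 * n : ℕ) : ℕ∞) ≤ κ → (hankelMat s n).PosSemidef) ∧
  (∀ n : ℕ, ((2 * n + 1 : ℕ) : ℕ∞) ≤ κ →
    ((-(α : ℂ)) • hankelMat s n + hankelKMat s n).PosSemidef)

/-- the class K^{>}_{q,κ,α} of α-Stieltjes right-positive definite sequences. -/
def Kgt {q : ℕ} (α : ℝ) (κ : ℕ∞) (s : ℕ → Matrix (Fin q) (Fin q) ℂ) : Prop :=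
  (∀ n : ℕ, ((2 * n : ℕ) : ℕ∞) ≤ κ → (hankelMat s n).PosDef) ∧
  (∀ n : ℕ, ((2 * n + 1 : ℕ) : ℕ∞) ≤ κ →
    ((-(α : ℂ)) • hankelMat s n + hankelKMat s n).PosDef)

namespace P96
open Finset

lemma isMP_unique {m n : Type*} [Fintype m] [Fintype n] {A : Matrix m n ℂ}
    {B C : Matrix n m ℂ} (hB : IsMP A B) (hC : IsMP A C) : B = C := by
  obtain ⟨hB1, hB2, hB3, hB4⟩ := hB
  obtain ⟨hC1, hC2, hC3, hC4⟩ := hC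
  have hAB : A * B = A * C := by
    calc A * B = (A * B)ᴴ := hB3.symm
    _ = Bᴴ * (A * C * A)ᴴ := by rw [conjTranspose_mul, hC1]
    _ = (A * B)ᴴ * (A * C)ᴴ := by
        simp only [conjTranspose_mul, Matrix.mul_assoc]
    _ = (A * B) * (A * C) := by rw [hB3, hC3]
    _ = A * C := by
        rw [← Matrix.mul_assoc (A*B) A C, hB1]
  have hBA : B * A = C * A := by
    calc B * A = (B * A)ᴴ := hB4.symm
    _ = (A * C * A)ᴴ * Bᴴ := by rw [conjTranspose_mul, hC1]
    _ = (C * A)ᴴ * (B * A)ᴴ := by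
        simp only [conjTranspose_mul, Matrix.mul_assoc]
    _ = (C * A) * (B * A) := by rw [hB4, hC4]
    _ = C * A := by
        rw [Matrix.mul_assoc C A (B*A), ← Matrix.mul_assoc A B A, hB1]
  calc B = B * A * B := hB2.symm
  _ = B * (A * C) := by rw [Matrix.mul_assoc, hAB]
  _ = (C * A) * C := by rw [← Matrix.mul_assoc, hBA]
  _ = C := hC2

lemma mp_eq {m n : Type*} [Fintype m] [Fintype n] {A : Matrix m n ℂ}
    {B : Matrix n m ℂ} (h : IsMP A B) : mp A = B := by
  rw [mp, dif_pos ⟨B, h⟩]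
  exact isMP_unique (Exists.choose_spec (⟨B, h⟩ : ∃ B, IsMP A B)) h

lemma isMP_inv {n : Type*} [Fintype n] [DecidableEq n] {A : Matrix n n ℂ}
    (h : IsUnit A) : IsMP A A⁻¹ := by
  have h1 : A * A⁻¹ = 1 := mul_nonsing_inv A ((isUnit_iff_isUnit_det A).mp h)
  have h2 : A⁻¹ * A = 1 := nonsing_inv_mul A ((isUnit_iff_isUnit_det A).mp h)
  refine ⟨by rw [h1, one_mul], by rw [mul_assoc, h1, mul_one], ?_, ?_⟩ <;>
    simp [h1, h2]

lemma mp_inv {n : Type*} [Fintype n] [DecidableEq n] {A : Matrix n n ℂ}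
    (h : IsUnit A) : mp A = A⁻¹ := mp_eq (isMP_inv h)

variable {q : ℕ}

noncomputable def dlt (q : ℕ) (m : ℕ) : Matrix (Fin q) (Fin q) ℂ := if m = 0 then 1 else 0

noncomputable def cauchy (f g : ℕ → Matrix (Fin q) (Fin q) ℂ) (m : ℕ) :
    Matrix (Fin q) (Fin q) ℂ := ∑ l ∈ range (m+1), f (m-l) * g l

lemma recip_zero (s : ℕ → Matrix (Fin q) (Fin q) ℂ) : recip s 0 = mp (s 0) := by
  rw [recip]

lemma recip_succ (s : ℕ → Matrix (Fin q) (Fin q) ℂ) (j : ℕ) :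
    recip s (j+1) = -(mp (s 0) * ∑ l ∈ range (j+1), s (j+1-l) * recip s l) := by
  rw [recip, Fin.sum_univ_eq_sum_range (fun l => s (j+1-l) * recip s l) (j+1)]

section seq
variable {s : ℕ → Matrix (Fin q) (Fin q) ℂ} (h0 : IsUnit (s 0))
include h0

lemma cauchy_C1 : ∀ m, cauchy s (recip s) m = dlt q m := by
  intro m
  match m with
  | 0 =>
    simp [cauchy, dlt, recip_zero, mp_inv h0,
      mul_nonsing_inv _ ((isUnit_iff_isUnit_det _).mp h0)]
  | (m+1) =>
    rw [cauchy, Finset.sum_range_succ]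
    have : s (m+1-(m+1)) * recip s (m+1) =
        -∑ l ∈ range (m+1), s (m+1-l) * recip s l := by
      rw [Nat.sub_self, recip_succ, mp_inv h0, mul_neg, ← Matrix.mul_assoc,
        mul_nonsing_inv _ ((isUnit_iff_isUnit_det _).mp h0), Matrix.one_mul]
    rw [this, dlt, if_neg (Nat.succ_ne_zero m), add_neg_cancel]

end seq
variable {q : ℕ}

def blkM (N M : ℕ) (f : ℕ → ℕ → Matrix (Fin q) (Fin q) ℂ) :
    Matrix (Fin N × Fin q) (Fin M × Fin q) ℂ :=
  Matrix.of fun jp kp => f jp.1.val kp.1.val jp.2 kp.2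

lemma blkM_mul (N M L : ℕ) (f g : ℕ → ℕ → Matrix (Fin q) (Fin q) ℂ) :
    blkM N M f * blkM M L g = blkM N L (fun j k => ∑ a ∈ range M, f j a * g a k) := by
  ext ⟨j, p⟩ ⟨k, p'⟩
  simp only [blkM, Matrix.of_apply, Matrix.mul_apply, Fintype.sum_prod_type,
    Matrix.sum_apply]
  exact Fin.sum_univ_eq_sum_range (fun a => ∑ x : Fin q, f j a p x * g a k x p') M

lemma blkM_conjTranspose (N M : ℕ) (f : ℕ → ℕ → Matrix (Fin q) (Fin q) ℂ) :
    (blkM N M f)ᴴ = blkM M N (fun k j => (f j k)ᴴ) := by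
  ext ⟨k, p⟩ ⟨j, p'⟩
  simp [blkM, Matrix.conjTranspose_apply]

lemma blkM_congr {N M : ℕ} {f g : ℕ → ℕ → Matrix (Fin q) (Fin q) ℂ}
    (h : ∀ j k, j < N → k < M → f j k = g j k) : blkM N M f = blkM N M g := by
  ext ⟨j, p⟩ ⟨k, p'⟩
  rw [blkM, blkM, Matrix.of_apply, Matrix.of_apply, h _ _ j.isLt k.isLt]

def TLa (N : ℕ) (f : ℕ → Matrix (Fin q) (Fin q) ℂ) :
    Matrix (Fin N × Fin q) (Fin N × Fin q) ℂ :=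
  blkM N N (fun j a => if a ≤ j then f (j - a) else 0)

lemma sum_ite_le {M : Type*} [AddCommMonoid M] {j N : ℕ} (hj : j < N) (F : ℕ → M) :
    ∑ a ∈ range N, (if a ≤ j then F a else 0) = ∑ a ∈ range (j+1), F a := by
  have h1 : ∑ a ∈ range (j+1), (if a ≤ j then F a else 0)
      = ∑ a ∈ range N, (if a ≤ j then F a else 0) :=
    Finset.sum_subset (by rw [Finset.range_subset_range]; omega)
      (fun x _ hnx => if_neg (by rw [Finset.mem_range] at hnx; omega))
  rw [← h1]
  exact Finset.sum_congr rfl fun x hx => if_pos (by rw [Finset.mem_range] at hx; omega)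

lemma sumA {j N : ℕ} (hj : j < N) (F G : ℕ → Matrix (Fin q) (Fin q) ℂ) :
    ∑ a ∈ range N, (if a ≤ j then F a else 0) * G a = ∑ a ∈ range (j+1), F a * G a := by
  have : ∀ a, (if a ≤ j then F a else 0) * G a = (if a ≤ j then F a * G a else 0) :=
    fun a => by split_ifs <;> simp
  simp_rw [this]
  exact sum_ite_le hj _

lemma sumB {k N : ℕ} (hk : k < N) (F G : ℕ → Matrix (Fin q) (Fin q) ℂ) :
    ∑ b ∈ range N, F b * (if b ≤ k then G b else 0) = ∑ b ∈ range (k+1), F b * G b := by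
  have : ∀ b, F b * (if b ≤ k then G b else 0) = (if b ≤ k then F b * G b else 0) :=
    fun b => by split_ifs <;> simp
  simp_rw [this]
  exact sum_ite_le hk _

lemma TL_mul_TL (N : ℕ) (f g : ℕ → Matrix (Fin q) (Fin q) ℂ) :
    TLa N f * TLa N g = TLa N (cauchy f g) := by
  rw [TLa, TLa, TLa, blkM_mul]
  apply blkM_congr
  intro j k hj hk
  have hsummand : ∀ a, (if a ≤ j then f (j-a) else 0) * (if k ≤ a then g (a-k) else 0)
      = (if k ≤ a ∧ a ≤ j then f (j-a) * g (a-k) else 0) := by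
    intro a
    by_cases h1 : a ≤ j <;> by_cases h2 : k ≤ a <;> simp [h1, h2]
  simp_rw [hsummand]
  by_cases hkj : k ≤ j
  · rw [if_pos hkj]
    have step1 : ∑ a ∈ range N, (if k ≤ a ∧ a ≤ j then f (j-a) * g (a-k) else 0)
        = ∑ a ∈ range (j+1), (if k ≤ a then f (j-a) * g (a-k) else 0) := by
      have : ∀ a, (if k ≤ a ∧ a ≤ j then f (j-a) * g (a-k) else 0)
          = (if a ≤ j then (if k ≤ a then f (j-a) * g (a-k) else 0) else 0) := by
        intro a; by_cases h1 : a ≤ j <;> by_cases h2 : k ≤ a <;> simp [h1, h2]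
      simp_rw [this]
      exact sum_ite_le hj _
    rw [step1]
    have step2 : ∑ a ∈ range (j+1), (if k ≤ a then f (j-a) * g (a-k) else 0)
        = ∑ a ∈ Finset.Ico k (j+1), f (j-a) * g (a-k) := by
      rw [Finset.range_eq_Ico, ← Finset.sum_Ico_consecutive _ (Nat.zero_le k) (by omega)]
      have hz : ∑ a ∈ Finset.Ico 0 k, (if k ≤ a then f (j-a) * g (a-k) else 0) = 0 :=
        Finset.sum_eq_zero fun a ha => if_neg (by rw [Finset.mem_Ico] at ha; omega)
      have ho : ∑ a ∈ Finset.Ico k (j+1), (if k ≤ a then f (j-a) * g (a-k) else 0)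
          = ∑ a ∈ Finset.Ico k (j+1), f (j-a) * g (a-k) :=
        Finset.sum_congr rfl fun a ha => if_pos (by rw [Finset.mem_Ico] at ha; omega)
      rw [hz, ho, zero_add]
    rw [step2, Finset.sum_Ico_eq_sum_range]
    rw [cauchy]
    rw [show j + 1 - k = (j - k) + 1 by omega]
    exact Finset.sum_congr rfl fun c hc => by
      rw [Finset.mem_range] at hc
      rw [show j - (k + c) = j - k - c by omega, show k + c - k = c by omega]
  · rw [if_neg hkj]
    exact Finset.sum_eq_zero fun a ha => if_neg (by omega)

lemma TL_one (N : ℕ) : TLa N (dlt q) = 1 := by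
  ext ⟨j, p⟩ ⟨k, p'⟩
  rw [TLa, blkM, Matrix.of_apply, Matrix.one_apply]
  by_cases hjk : (j : ℕ) = (k : ℕ)
  · rw [if_pos (by omega : (k:ℕ) ≤ j), show (j:ℕ) - k = 0 by omega, dlt, if_pos rfl]
    have : j = k := Fin.ext hjk
    subst this
    by_cases hp : p = p'
    · subst hp; simp [Matrix.one_apply]
    · simp [Matrix.one_apply, hp, Prod.ext_iff]
  · have hne : ((j, p) : Fin N × Fin q) ≠ (k, p') := by
      intro hcontra
      exact hjk (congrArg (fun z => ((z.1 : Fin N) : ℕ)) hcontra)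
    rw [if_neg hne]
    by_cases hkj : (k : ℕ) ≤ j
    · rw [if_pos hkj, dlt, if_neg (show ¬((j:ℕ) - (k:ℕ) = 0) by omega)]; rfl
    · rw [if_neg hkj]; rfl

lemma TL_inj {N : ℕ} {f g : ℕ → Matrix (Fin q) (Fin q) ℂ}
    (h : TLa N f = TLa N g) {m : ℕ} (hm : m < N) : f m = g m := by
  ext p p'
  have h' := Matrix.ext_iff.mpr h (⟨m, hm⟩, p) (⟨0, by omega⟩, p')
  simpa [TLa, blkM] using h'

section seq2
variable {s : ℕ → Matrix (Fin q) (Fin q) ℂ} (h0 : IsUnit (s 0))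
include h0

lemma cauchy_C2 : ∀ m, cauchy (recip s) s m = dlt q m := by
  intro m
  have h1 : TLa (m+1) s * TLa (m+1) (recip s) = 1 := by
    rw [TL_mul_TL, show cauchy s (recip s) = dlt q from funext (cauchy_C1 h0), TL_one]
  have h2 : TLa (m+1) (recip s) * TLa (m+1) s = 1 := mul_eq_one_comm.mp h1
  rw [TL_mul_TL] at h2
  exact TL_inj (h2.trans (TL_one (m+1)).symm) (Nat.lt_succ_self m)

lemma cauchy_C1r (m : ℕ) : ∑ l ∈ range (m+1), s l * recip s (m-l) = dlt q m := by
  have hr := sum_range_reflect (fun l => s l * recip s (m - l)) (m+1)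
  rw [← hr, ← cauchy_C1 h0 m, cauchy]
  exact Finset.sum_congr rfl fun j hj => by
    rw [Finset.mem_range] at hj
    rw [show m + 1 - 1 - j = m - j by omega, show m - (m - j) = j by omega]

lemma cauchy_C2r (m : ℕ) : ∑ l ∈ range (m+1), recip s l * s (m-l) = dlt q m := by
  have hr := sum_range_reflect (fun l => recip s l * s (m - l)) (m+1)
  rw [← hr, ← cauchy_C2 h0 m, cauchy]
  exact Finset.sum_congr rfl fun j hj => by
    rw [Finset.mem_range] at hj
    rw [show m + 1 - 1 - j = m - j by omega, show m - (m - j) = j by omega]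

end seq2
variable {q : ℕ}

lemma sum_triangle_swap {M : Type*} [AddCommMonoid M] (k : ℕ) (F : ℕ → ℕ → M) :
    ∑ l ∈ range (k+1), ∑ c ∈ range (k+1-l), F l c
      = ∑ c ∈ range (k+1), ∑ l ∈ range (k+1-c), F l c := by
  calc ∑ l ∈ range (k+1), ∑ c ∈ range (k+1-l), F l c
      = ∑ l ∈ range (k+1), ∑ c ∈ range (k+1), (if c ≤ k - l then F l c else 0) := by
        refine Finset.sum_congr rfl fun l hl => ?_
        rw [Finset.mem_range] at hl
        rw [sum_ite_le (show k - l < k + 1 by omega) fun c => F l c,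
          show k - l + 1 = k + 1 - l by omega]
    _ = ∑ c ∈ range (k+1), ∑ l ∈ range (k+1), (if c ≤ k - l then F l c else 0) :=
        Finset.sum_comm
    _ = ∑ c ∈ range (k+1), ∑ l ∈ range (k+1-c), F l c := by
        refine Finset.sum_congr rfl fun c hc => ?_
        rw [Finset.mem_range] at hc
        rw [show k + 1 - c = k - c + 1 by omega,
          ← sum_ite_le (show k - c < k + 1 by omega) fun l => F l c]
        refine Finset.sum_congr rfl fun l hl => ?_
        rw [Finset.mem_range] at hl
        by_cases h : c ≤ k - l
        · rw [if_pos h, if_pos (by omega)]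
        · rw [if_neg h, if_neg (by omega)]

lemma sum_triangle_comm {M : Type*} [AddCommMonoid M] (k : ℕ) (F : ℕ → ℕ → M) :
    ∑ b ∈ range (k+1), ∑ l ∈ range (b+1), F l b
      = ∑ l ∈ range (k+1), ∑ c ∈ range (k+1-l), F l (l+c) := by
  calc ∑ b ∈ range (k+1), ∑ l ∈ range (b+1), F l b
      = ∑ b ∈ range (k+1), ∑ l ∈ range (k+1), (if l ≤ b then F l b else 0) := by
        refine Finset.sum_congr rfl fun b hb => ?_
        rw [Finset.mem_range] at hb
        rw [sum_ite_le (show b < k + 1 by omega) fun l => F l b]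
    _ = ∑ l ∈ range (k+1), ∑ b ∈ range (k+1), (if l ≤ b then F l b else 0) :=
        Finset.sum_comm
    _ = ∑ l ∈ range (k+1), ∑ c ∈ range (k+1-l), F l (l+c) := by
        refine Finset.sum_congr rfl fun l hl => ?_
        rw [Finset.mem_range] at hl
        rw [Finset.range_eq_Ico,
          ← Finset.sum_Ico_consecutive _ (Nat.zero_le l) (show l ≤ k+1 by omega)]
        have hz : ∑ b ∈ Finset.Ico 0 l, (if l ≤ b then F l b else 0) = 0 :=
          Finset.sum_eq_zero fun b hb => if_neg (by rw [Finset.mem_Ico] at hb; omega)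
        have ho : ∑ b ∈ Finset.Ico l (k+1), (if l ≤ b then F l b else 0)
            = ∑ b ∈ Finset.Ico l (k+1), F l b :=
          Finset.sum_congr rfl fun b hb => if_pos (by rw [Finset.mem_Ico] at hb; omega)
        rw [hz, ho, zero_add, Finset.sum_Ico_eq_sum_range, Finset.range_eq_Ico]

section seq3
variable {s : ℕ → Matrix (Fin q) (Fin q) ℂ} (h0 : IsUnit (s 0))
include h0

lemma recip_herm {J : ℕ} (hH : ∀ j, j ≤ J → (s j)ᴴ = s j) :
    ∀ m, m ≤ J → (recip s m)ᴴ = recip s m := by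
  intro m
  induction m using Nat.strong_induction_on with
  | _ m IH =>
    match m with
    | 0 =>
      intro _
      rw [recip_zero, mp_inv h0, conjTranspose_nonsing_inv, hH 0 (Nat.zero_le J)]
    | (m+1) =>
      intro hmJ
      have hrec : recip s (m+1) = -(((s 0)⁻¹) * ∑ l ∈ range (m+1), s (m+1-l) * recip s l) := by
        rw [recip_succ, mp_inv h0]
      have hT : (∑ l ∈ range (m+1), s (m+1-l) * recip s l)ᴴ
          = ∑ l ∈ range (m+1), recip s l * s (m+1-l) := by
        rw [conjTranspose_sum]
        refine Finset.sum_congr rfl fun l hl => ?_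
        rw [Finset.mem_range] at hl
        rw [conjTranspose_mul, IH l (by omega) (by omega), hH (m+1-l) (by omega)]
      have hC := cauchy_C2r h0 (m+1)
      rw [Finset.sum_range_succ, Nat.sub_self, dlt, if_neg (Nat.succ_ne_zero m)] at hC
      have hTval : ∑ l ∈ range (m+1), recip s l * s (m+1-l) = -(recip s (m+1) * s 0) := by
        rw [eq_neg_iff_add_eq_zero]; exact hC
      rw [hrec, conjTranspose_neg, conjTranspose_mul, hT, hTval,
        conjTranspose_nonsing_inv, hH 0 (Nat.zero_le J)]
      rw [neg_mul, neg_neg, Matrix.mul_assoc,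
        mul_nonsing_inv _ ((isUnit_iff_isUnit_det _).mp h0), Matrix.mul_one]
      exact hrec

lemma Gidentity (j k : ℕ) :
    recip s (j+k+1) = -∑ a ∈ range (j+1), ∑ b ∈ range (k+1),
      recip s (j-a) * s (a+b+1) * recip s (k-b) := by
  have stepA : ∀ b, ∑ a ∈ range (j+1), recip s (j-a) * s (a+b+1)
      = -∑ l ∈ range (b+1), recip s (j+b+1-l) * s l := by
    intro b
    have hC := cauchy_C2 h0 (j+b+1)
    rw [cauchy, dlt, if_neg (by omega), show j+b+1+1 = j+b+2 by omega, Finset.range_eq_Ico,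
      ← Finset.sum_Ico_consecutive _ (Nat.zero_le (b+1)) (show b+1 ≤ j+b+2 by omega),
      Finset.sum_Ico_eq_sum_range, Finset.sum_Ico_eq_sum_range] at hC
    have e1 : ∑ l ∈ range (b+1-0), recip s (j+b+1-(0+l)) * s (0+l)
        = ∑ l ∈ range (b+1), recip s (j+b+1-l) * s l :=
      Finset.sum_congr (by rw [Nat.sub_zero]) (fun l _ => by rw [Nat.zero_add])
    have e2 : ∑ a ∈ range (j+b+2-(b+1)), recip s (j+b+1-(b+1+a)) * s (b+1+a)
        = ∑ a ∈ range (j+1), recip s (j-a) * s (a+b+1) := by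
      refine Finset.sum_congr (by congr 1; omega) (fun a ha => ?_)
      rw [Finset.mem_range] at ha
      rw [show j+b+1-(b+1+a) = j-a by omega, show b+1+a = a+b+1 by omega]
    rw [e1, e2] at hC
    rw [eq_neg_iff_add_eq_zero, add_comm]
    exact hC
  have main : ∑ b ∈ range (k+1), (∑ a ∈ range (j+1), recip s (j-a) * s (a+b+1))
        * recip s (k-b) = -(recip s (j+k+1)) := by
    simp_rw [stepA, neg_mul, Finset.sum_neg_distrib]
    rw [neg_inj]
    simp_rw [Finset.sum_mul]
    have swap1 : ∑ b ∈ range (k+1), ∑ l ∈ range (b+1),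
          recip s (j+b+1-l) * s l * recip s (k-b)
        = ∑ c ∈ range (k+1), ∑ l ∈ range (k+1-c),
          recip s (j+(l+c)+1-l) * s l * recip s (k-(l+c)) := by
      rw [sum_triangle_comm k (fun l b => recip s (j+b+1-l) * s l * recip s (k-b)),
        sum_triangle_swap k (fun l c => recip s (j+(l+c)+1-l) * s l * recip s (k-(l+c)))]
    rw [swap1]
    have inner : ∀ c ∈ range (k+1), ∑ l ∈ range (k+1-c),
          recip s (j+(l+c)+1-l) * s l * recip s (k-(l+c))
        = recip s (j+c+1) * dlt q (k-c) := by
      intro c hc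
      rw [Finset.mem_range] at hc
      have e3 : ∀ l, recip s (j+(l+c)+1-l) * s l * recip s (k-(l+c))
          = recip s (j+c+1) * (s l * recip s ((k-c)-l)) := by
        intro l
        rw [show j+(l+c)+1-l = j+c+1 by omega, show k-(l+c) = k-c-l by omega,
          Matrix.mul_assoc]
      simp_rw [e3]
      rw [← Finset.mul_sum, show k+1-c = (k-c)+1 by omega, cauchy_C1r h0 (k-c)]
    rw [Finset.sum_congr rfl inner]
    rw [Finset.sum_eq_single k
      (fun c hc hck => by
        rw [Finset.mem_range] at hc
        rw [dlt, if_neg (by omega), mul_zero])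
      (fun hk => absurd (Finset.self_mem_range_succ k) hk)]
    rw [Nat.sub_self, dlt, if_pos rfl, Matrix.mul_one]
  have lhs_eq : ∑ a ∈ range (j+1), ∑ b ∈ range (k+1),
        recip s (j-a) * s (a+b+1) * recip s (k-b)
      = ∑ b ∈ range (k+1), (∑ a ∈ range (j+1), recip s (j-a) * s (a+b+1))
        * recip s (k-b) := by
    rw [Finset.sum_comm]
    simp_rw [Finset.sum_mul]
  rw [lhs_eq, main, neg_neg]

end seq3
variable {q : ℕ}

section seq4
variable {s : ℕ → Matrix (Fin q) (Fin q) ℂ} (h0 : IsUnit (s 0))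
include h0

lemma G2identity (j k : ℕ) :
    recip s (j+k+2) = -∑ a ∈ range (j+2), ∑ b ∈ range (k+2),
      recip s (j+1-a) * s (a+b) * recip s (k+1-b) := by
  have stepA : ∀ b, ∑ a ∈ range (j+2), recip s (j+1-a) * s (a+b)
      = -∑ l ∈ range b, recip s (j+1+b-l) * s l := by
    intro b
    have hC := cauchy_C2 h0 (j+1+b)
    rw [cauchy, dlt, if_neg (by omega), show j+1+b+1 = j+b+2 by omega, Finset.range_eq_Ico,
      ← Finset.sum_Ico_consecutive _ (Nat.zero_le b) (show b ≤ j+b+2 by omega),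
      Finset.sum_Ico_eq_sum_range, Finset.sum_Ico_eq_sum_range] at hC
    have e1 : ∑ l ∈ range (b-0), recip s (j+1+b-(0+l)) * s (0+l)
        = ∑ l ∈ range b, recip s (j+1+b-l) * s l :=
      Finset.sum_congr (by rw [Nat.sub_zero]) (fun l _ => by rw [Nat.zero_add])
    have e2 : ∑ a ∈ range (j+b+2-b), recip s (j+1+b-(b+a)) * s (b+a)
        = ∑ a ∈ range (j+2), recip s (j+1-a) * s (a+b) := by
      refine Finset.sum_congr (by congr 1; omega) (fun a ha => ?_)
      rw [Finset.mem_range] at ha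
      rw [show j+1+b-(b+a) = j+1-a by omega, show b+a = a+b by omega]
    rw [e1, e2] at hC
    rw [eq_neg_iff_add_eq_zero, add_comm]
    exact hC
  have main : ∑ b ∈ range (k+2), (∑ a ∈ range (j+2), recip s (j+1-a) * s (a+b))
        * recip s (k+1-b) = -(recip s (j+k+2)) := by
    simp_rw [stepA, neg_mul, Finset.sum_neg_distrib]
    rw [neg_inj]
    simp_rw [Finset.sum_mul]
    rw [Finset.sum_range_succ' (fun b => ∑ l ∈ range b,
      recip s (j+1+b-l) * s l * recip s (k+1-b)) (k+1)]
    rw [Finset.range_zero, Finset.sum_empty, add_zero]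
    have swap1 : ∑ b ∈ range (k+1), ∑ l ∈ range (b+1),
          recip s (j+1+(b+1)-l) * s l * recip s (k+1-(b+1))
        = ∑ c ∈ range (k+1), ∑ l ∈ range (k+1-c),
          recip s (j+1+((l+c)+1)-l) * s l * recip s (k+1-((l+c)+1)) := by
      rw [sum_triangle_comm k (fun l b => recip s (j+1+(b+1)-l) * s l * recip s (k+1-(b+1))),
        sum_triangle_swap k (fun l c =>
          recip s (j+1+((l+c)+1)-l) * s l * recip s (k+1-((l+c)+1)))]
    rw [swap1]
    have inner : ∀ c ∈ range (k+1), ∑ l ∈ range (k+1-c),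
          recip s (j+1+((l+c)+1)-l) * s l * recip s (k+1-((l+c)+1))
        = recip s (j+c+2) * dlt q (k-c) := by
      intro c hc
      rw [Finset.mem_range] at hc
      have e3 : ∀ l, recip s (j+1+((l+c)+1)-l) * s l * recip s (k+1-((l+c)+1))
          = recip s (j+c+2) * (s l * recip s ((k-c)-l)) := by
        intro l
        rw [show j+1+((l+c)+1)-l = j+c+2 by omega, show k+1-((l+c)+1) = k-c-l by omega,
          Matrix.mul_assoc]
      simp_rw [e3]
      rw [← Finset.mul_sum, show k+1-c = (k-c)+1 by omega, cauchy_C1r h0 (k-c)]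
    rw [Finset.sum_congr rfl inner]
    rw [Finset.sum_eq_single k
      (fun c hc hck => by
        rw [Finset.mem_range] at hc
        rw [dlt, if_neg (by omega), mul_zero])
      (fun hk => absurd (Finset.self_mem_range_succ k) hk)]
    rw [Nat.sub_self, dlt, if_pos rfl, Matrix.mul_one, show j+k+2 = j+k+2 from rfl]
  have lhs_eq : ∑ a ∈ range (j+2), ∑ b ∈ range (k+2),
        recip s (j+1-a) * s (a+b) * recip s (k+1-b)
      = ∑ b ∈ range (k+2), (∑ a ∈ range (j+2), recip s (j+1-a) * s (a+b))
        * recip s (k+1-b) := by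
    rw [Finset.sum_comm]
    simp_rw [Finset.sum_mul]
  rw [lhs_eq, main, neg_neg]

lemma E3identity (j : ℕ) :
    ∑ a ∈ range (j+1), recip s (j-a) * s (a+1) = -(recip s (j+1) * s 0) := by
  have hC := cauchy_C2 h0 (j+1)
  rw [cauchy, dlt, if_neg (by omega)] at hC
  rw [Finset.sum_range_succ' (fun l => recip s (j+1-l) * s l) (j+1)] at hC
  have e1 : ∑ l ∈ range (j+1), recip s (j+1-(l+1)) * s (l+1)
      = ∑ a ∈ range (j+1), recip s (j-a) * s (a+1) :=
    Finset.sum_congr rfl (fun l hl => by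
      rw [Finset.mem_range] at hl
      rw [show j+1-(l+1) = j-l by omega])
  rw [e1, Nat.sub_zero] at hC
  rw [eq_neg_iff_add_eq_zero]
  exact hC

lemma E4identity (k : ℕ) :
    ∑ b ∈ range (k+1), s (b+1) * recip s (k-b) = -(s 0 * recip s (k+1)) := by
  have hC := cauchy_C1r h0 (k+1)
  rw [dlt, if_neg (by omega)] at hC
  rw [Finset.sum_range_succ' (fun l => s l * recip s (k+1-l)) (k+1)] at hC
  have e1 : ∑ l ∈ range (k+1), s (l+1) * recip s (k+1-(l+1))
      = ∑ b ∈ range (k+1), s (b+1) * recip s (k-b) :=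
    Finset.sum_congr rfl (fun l hl => by
      rw [Finset.mem_range] at hl
      rw [show k+1-(l+1) = k-l by omega])
  rw [e1, Nat.sub_zero] at hC
  rw [eq_neg_iff_add_eq_zero]
  exact hC

lemma G3identity (j k : ℕ) :
    -(recip s (j+k+2)) = ∑ a ∈ range (j+1), ∑ b ∈ range (k+1),
      recip s (j-a) * (s (a+b+2) - s (a+1) * (s 0)⁻¹ * s (b+1)) * recip s (k-b) := by
  have hdet := (isUnit_iff_isUnit_det _).mp h0
  have hS2 : ∑ a ∈ range (j+1), ∑ b ∈ range (k+1),
        recip s (j-a) * (s (a+1) * (s 0)⁻¹ * s (b+1)) * recip s (k-b)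
      = recip s (j+1) * (s 0 * recip s (k+1)) := by
    have e0 : ∀ a b, recip s (j-a) * (s (a+1) * (s 0)⁻¹ * s (b+1)) * recip s (k-b)
        = (recip s (j-a) * s (a+1)) * ((s 0)⁻¹ * (s (b+1) * recip s (k-b))) := by
      intro a b; simp only [Matrix.mul_assoc]
    simp_rw [e0]
    rw [← Finset.sum_mul_sum, E3identity h0 j, ← Finset.mul_sum, E4identity h0 k]
    rw [mul_neg ((s 0)⁻¹), neg_mul_neg, Matrix.mul_assoc (recip s (j+1)) (s 0) _,
      ← Matrix.mul_assoc (s 0) ((s 0)⁻¹) _, mul_nonsing_inv _ hdet, Matrix.one_mul]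
  have hS1 : ∑ a ∈ range (j+1), ∑ b ∈ range (k+1),
        recip s (j-a) * s (a+b+2) * recip s (k-b)
      = -(recip s (j+k+2)) + recip s (j+1) * (s 0 * recip s (k+1)) := by
    have hG2 := G2identity h0 j k
    have peel : ∑ a ∈ range (j+2), ∑ b ∈ range (k+2),
          recip s (j+1-a) * s (a+b) * recip s (k+1-b)
        = (∑ a ∈ range (j+1), ∑ b ∈ range (k+1),
            recip s (j-a) * s (a+b+2) * recip s (k-b))
          - recip s (j+1) * (s 0 * recip s (k+1)) := by
      rw [Finset.sum_range_succ' (fun a => ∑ b ∈ range (k+2),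
        recip s (j+1-a) * s (a+b) * recip s (k+1-b)) (j+1)]
      have last0 : ∑ b ∈ range (k+2), recip s (j+1-0) * s (0+b) * recip s (k+1-b) = 0 := by
        have e1 : ∀ b, recip s (j+1-0) * s (0+b) * recip s (k+1-b)
            = recip s (j+1) * (s b * recip s (k+1-b)) := by
          intro b; rw [Nat.sub_zero, Nat.zero_add, Matrix.mul_assoc]
        simp_rw [e1]
        rw [← Finset.mul_sum, cauchy_C1r h0 (k+1), dlt, if_neg (by omega), mul_zero]
      rw [last0, add_zero]
      have inner : ∀ a ∈ range (j+1), ∑ b ∈ range (k+2),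
            recip s (j+1-(a+1)) * s ((a+1)+b) * recip s (k+1-b)
          = (∑ b ∈ range (k+1), recip s (j-a) * s (a+b+2) * recip s (k-b))
            + recip s (j-a) * s (a+1) * recip s (k+1) := by
        intro a ha
        rw [Finset.mem_range] at ha
        rw [Finset.sum_range_succ' (fun b =>
          recip s (j+1-(a+1)) * s ((a+1)+b) * recip s (k+1-b)) (k+1)]
        congr 1
        · refine Finset.sum_congr rfl (fun b hb => ?_)
          rw [Finset.mem_range] at hb
          rw [show j+1-(a+1) = j-a by omega, show (a+1)+(b+1) = a+b+2 by omega,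
            show k+1-(b+1) = k-b by omega]
        · rw [show j+1-(a+1) = j-a by omega, show (a+1)+0 = a+1 by omega, Nat.sub_zero]
      rw [Finset.sum_congr rfl inner, Finset.sum_add_distrib]
      have h3 : ∑ a ∈ range (j+1), recip s (j-a) * s (a+1) * recip s (k+1)
          = -(recip s (j+1) * (s 0 * recip s (k+1))) := by
        rw [← Finset.sum_mul, E3identity h0 j, neg_mul, Matrix.mul_assoc]
      rw [h3, ← sub_eq_add_neg]
    rw [peel] at hG2
    rw [hG2, neg_neg]
    abel
  have expand : ∀ (a b : ℕ), recip s (j-a) * (s (a+b+2) - s (a+1) * (s 0)⁻¹ * s (b+1))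
        * recip s (k-b)
      = recip s (j-a) * s (a+b+2) * recip s (k-b)
        - recip s (j-a) * (s (a+1) * (s 0)⁻¹ * s (b+1)) * recip s (k-b) := by
    intro a b; rw [mul_sub, sub_mul]
  simp_rw [expand, Finset.sum_sub_distrib]
  rw [hS1, hS2]
  abel

end seq4
variable {q : ℕ}

lemma shiftA_zero (c : ℂ) (s : ℕ → Matrix (Fin q) (Fin q) ℂ) : shiftA c s 0 = s 0 := by
  rw [shiftA]

lemma shiftA_succ (c : ℂ) (s : ℕ → Matrix (Fin q) (Fin q) ℂ) (j : ℕ) :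
    shiftA c s (j+1) = (-c) • s j + s (j+1) := by
  rw [shiftA]

section seq5
variable {s : ℕ → Matrix (Fin q) (Fin q) ℂ} (h0 : IsUnit (s 0))
include h0

lemma cancel_left {X Y : Matrix (Fin q) (Fin q) ℂ} (h : s 0 * X = s 0 * Y) : X = Y := by
  have h2 := congrArg (fun z => (s 0)⁻¹ * z) h
  simpa only [← Matrix.mul_assoc,
    nonsing_inv_mul _ ((isUnit_iff_isUnit_det _).mp h0), Matrix.one_mul] using h2

lemma recip_unique {x : ℕ → Matrix (Fin q) (Fin q) ℂ}
    (hx : ∀ m, cauchy s x m = dlt q m) : ∀ m, x m = recip s m := by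
  intro m
  induction m using Nat.strong_induction_on with
  | _ m IH =>
    match m with
    | 0 =>
      have h1 := hx 0
      have h2 := cauchy_C1 h0 0
      rw [cauchy, Finset.sum_range_one, Nat.sub_zero] at h1 h2
      exact cancel_left h0 (h1.trans h2.symm)
    | (m+1) =>
      have h1 := hx (m+1)
      have h2 := cauchy_C1 h0 (m+1)
      rw [cauchy, Finset.sum_range_succ, Nat.sub_self] at h1 h2
      have e1 : ∑ l ∈ range (m+1), s (m+1-l) * x l
          = ∑ l ∈ range (m+1), s (m+1-l) * recip s l :=
        Finset.sum_congr rfl (fun l hl => by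
          rw [IH l (by rw [Finset.mem_range] at hl; omega)])
      rw [e1] at h1
      have h3 : s 0 * x (m+1) = s 0 * recip s (m+1) := by
        have := h1.trans h2.symm
        exact add_left_cancel this
      exact cancel_left h0 h3

lemma recip_shiftA (c : ℂ) :
    (recip s 0 = recip (shiftA c s) 0) ∧
    (∀ m, recip s (m+1) = recip (shiftA c s) (m+1) - c • recip (shiftA c s) m) := by
  have ht0 : IsUnit (shiftA c s 0) := by rw [shiftA_zero]; exact h0
  set x : ℕ → Matrix (Fin q) (Fin q) ℂ := fun m =>
    match m with
    | 0 => recip (shiftA c s) 0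
    | (m+1) => recip (shiftA c s) (m+1) - c • recip (shiftA c s) m with hx
  have hx0 : x 0 = recip (shiftA c s) 0 := rfl
  have hxs : ∀ m, x (m+1) = recip (shiftA c s) (m+1) - c • recip (shiftA c s) m :=
    fun m => rfl
  have hcauchy : ∀ m, cauchy s x m = dlt q m := by
    intro m
    match m with
    | 0 =>
      rw [cauchy, Finset.sum_range_one, Nat.sub_zero, hx0,
        show s 0 = shiftA c s 0 from (shiftA_zero c s).symm]
      have h2 := cauchy_C1 ht0 0
      rw [cauchy, Finset.sum_range_one, Nat.sub_zero] at h2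
      exact h2
    | (m+1) =>
      have lhs_eq : cauchy s x (m+1)
          = cauchy s (recip (shiftA c s)) (m+1)
            - c • cauchy s (recip (shiftA c s)) m := by
        rw [cauchy, Finset.sum_range_succ' (fun l => s (m+1-l) * x l) (m+1)]
        have e1 : ∀ l ∈ range (m+1), s (m+1-(l+1)) * x (l+1)
            = s (m-l) * recip (shiftA c s) (l+1)
              - c • (s (m-l) * recip (shiftA c s) l) := by
          intro l hl
          rw [Finset.mem_range] at hl
          rw [hxs, show m+1-(l+1) = m-l by omega, mul_sub, mul_smul_comm]
        rw [Finset.sum_congr rfl e1, Finset.sum_sub_distrib, ← Finset.smul_sum]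
        rw [Nat.sub_zero, hx0]
        have e2 : cauchy s (recip (shiftA c s)) (m+1)
            = ∑ l ∈ range (m+1), s (m-l) * recip (shiftA c s) (l+1)
              + s (m+1) * recip (shiftA c s) 0 := by
          rw [cauchy, Finset.sum_range_succ' (fun l => s (m+1-l) * recip (shiftA c s) l) (m+1),
            Nat.sub_zero]
          congr 1
          exact Finset.sum_congr rfl (fun l hl => by
            rw [Finset.mem_range] at hl
            rw [show m+1-(l+1) = m-l by omega])
        have e3 : cauchy s (recip (shiftA c s)) m
            = ∑ l ∈ range (m+1), s (m-l) * recip (shiftA c s) l := rfl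
        rw [e2, e3]
        abel
      have rhs_eq : cauchy (shiftA c s) (recip (shiftA c s)) (m+1)
          = cauchy s (recip (shiftA c s)) (m+1)
            - c • cauchy s (recip (shiftA c s)) m := by
        rw [cauchy, Finset.sum_range_succ, Nat.sub_self, shiftA_zero]
        have e1 : ∀ l ∈ range (m+1), shiftA c s (m+1-l) * recip (shiftA c s) l
            = s (m+1-l) * recip (shiftA c s) l
              - c • (s (m-l) * recip (shiftA c s) l) := by
          intro l hl
          rw [Finset.mem_range] at hl
          rw [show m+1-l = (m-l)+1 by omega, shiftA_succ, add_mul, smul_mul_assoc,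
            neg_smul, show (m-l)+1 = m+1-l by omega]
          abel
        rw [Finset.sum_congr rfl e1, Finset.sum_sub_distrib, ← Finset.smul_sum]
        have e2 : cauchy s (recip (shiftA c s)) (m+1)
            = ∑ l ∈ range (m+1), s (m+1-l) * recip (shiftA c s) l
              + s 0 * recip (shiftA c s) (m+1) := by
          rw [cauchy, Finset.sum_range_succ, Nat.sub_self]
        have e3 : cauchy s (recip (shiftA c s)) m
            = ∑ l ∈ range (m+1), s (m-l) * recip (shiftA c s) l := rfl
        rw [e2, e3]
        abel
      rw [lhs_eq, ← rhs_eq, cauchy_C1 ht0]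
  have huniq := recip_unique h0 hcauchy
  exact ⟨(huniq 0).symm.trans hx0.symm ▸ (huniq 0).symm, fun m => by
    rw [← huniq (m+1), hxs]⟩

end seq5

section posd
variable {n : Type*} [Fintype n] [DecidableEq n]

lemma posDef_conj {X B Binv : Matrix n n ℂ} (hX : X.PosDef)
    (h1 : B * Binv = 1) (h2 : Binv * B = 1) : (B * X * Bᴴ).PosDef := by
  refine Matrix.PosDef.of_dotProduct_mulVec_pos (hX.posSemidef.mul_mul_conjTranspose_same B).1 (fun ⦃x⦄ hx => ?_)
  have hv : Bᴴ *ᵥ x ≠ 0 := by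
    intro hc
    apply hx
    have hinv : Binvᴴ * Bᴴ = 1 := by
      rw [← conjTranspose_mul, h1, conjTranspose_one]
    calc x = (Binvᴴ * Bᴴ) *ᵥ x := by rw [hinv, Matrix.one_mulVec]
    _ = Binvᴴ *ᵥ (Bᴴ *ᵥ x) := by rw [← Matrix.mulVec_mulVec]
    _ = 0 := by rw [hc, Matrix.mulVec_zero]
  have := hX.dotProduct_mulVec_pos hv
  simpa only [star_mulVec, conjTranspose_conjTranspose, dotProduct_mulVec,
    vecMul_vecMul, Matrix.mul_assoc] using this

lemma posDef_of_posSemidef_isUnit {M : Matrix n n ℂ} (hpsd : M.PosSemidef)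
    (hu : IsUnit M) : M.PosDef := by
  refine Matrix.PosDef.of_dotProduct_mulVec_pos hpsd.1 (fun ⦃x⦄ hx => ?_)
  rcases lt_or_eq_of_le (hpsd.dotProduct_mulVec_nonneg x) with h | h
  · exact h
  · exfalso
    apply hx
    have hMx : M *ᵥ x = 0 := (hpsd.dotProduct_mulVec_zero_iff x).mp h.symm
    calc x = (M⁻¹ * M) *ᵥ x := by
          rw [nonsing_inv_mul _ ((isUnit_iff_isUnit_det _).mp hu), Matrix.one_mulVec]
    _ = M⁻¹ *ᵥ (M *ᵥ x) := by rw [← Matrix.mulVec_mulVec]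
    _ = 0 := by rw [hMx, Matrix.mulVec_zero]

lemma posDef_submatrix_equiv {m : Type*} [Fintype m] [DecidableEq m]
    {M : Matrix n n ℂ} (hM : M.PosDef) (e : m ≃ n) : (M.submatrix e e).PosDef := by
  refine Matrix.PosDef.of_dotProduct_mulVec_pos (hM.1.submatrix e) (fun ⦃x⦄ hx => ?_)
  have hy : (x ∘ e.symm) ≠ 0 := by
    intro hc
    apply hx
    funext i
    have := congrFun hc (e i)
    simpa using this
  have := hM.dotProduct_mulVec_pos hy
  have key : star x ⬝ᵥ (M.submatrix e e) *ᵥ x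
      = star (x ∘ e.symm) ⬝ᵥ M *ᵥ (x ∘ e.symm) := by
    rw [Matrix.submatrix_mulVec_equiv]
    rw [dotProduct, dotProduct]
    rw [← Equiv.sum_comp e (fun j => (star (x ∘ e.symm)) j * (M *ᵥ (x ∘ e.symm)) j)]
    refine Finset.sum_congr rfl (fun i _ => ?_)
    simp
  rw [key]
  exact this

end posd
variable {q : ℕ}

lemma u_eq (α : ℂ) (s : ℕ → Matrix (Fin q) (Fin q) ℂ) (j : ℕ) :
    schur1 α s j = -(s 0 * (recip (shiftA α s) (j+1) * s 0)) := by
  show s 0 * (-(recipA α s (j + 1))) * s 0 = _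
  rw [recipA, mul_neg, neg_mul, Matrix.mul_assoc]

lemma hankel_eq_blk (s : ℕ → Matrix (Fin q) (Fin q) ℂ) (n : ℕ) :
    hankelMat s n = blkM (n+1) (n+1) (fun j k => s (j+k)) := rfl

lemma TLa_conjTranspose (N : ℕ) (g : ℕ → Matrix (Fin q) (Fin q) ℂ) :
    (TLa N g)ᴴ = blkM N N (fun b k => if b ≤ k then (g (k-b))ᴴ else 0) := by
  rw [TLa, blkM_conjTranspose]
  exact blkM_congr (fun b k _ _ => by
    rw [apply_ite conjTranspose, conjTranspose_zero])

lemma TL_mul_eq_one {N : ℕ} {f g : ℕ → Matrix (Fin q) (Fin q) ℂ}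
    (h : ∀ m, cauchy f g m = dlt q m) : TLa N f * TLa N g = 1 := by
  rw [TL_mul_TL, show cauchy f g = dlt q from funext h, TL_one]

section bridge
variable {s : ℕ → Matrix (Fin q) (Fin q) ℂ} (h0 : IsUnit (s 0))
include h0

lemma cauchy_pair {w : ℕ → Matrix (Fin q) (Fin q) ℂ} (hw0 : w 0 = s 0) :
    (∀ m, cauchy (fun m => s 0 * recip w m) (fun m => w m * (s 0)⁻¹) m = dlt q m) ∧
    (∀ m, cauchy (fun m => w m * (s 0)⁻¹) (fun m => s 0 * recip w m) m = dlt q m) := by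
  have hw : IsUnit (w 0) := hw0 ▸ h0
  have hdet := (isUnit_iff_isUnit_det _).mp h0
  constructor
  · intro m
    have e1 : ∀ l, (s 0 * recip w (m-l)) * (w l * (s 0)⁻¹)
        = s 0 * ((recip w (m-l) * w l) * (s 0)⁻¹) := by
      intro l; simp only [Matrix.mul_assoc]
    rw [cauchy]
    simp_rw [e1]
    rw [← Finset.mul_sum, ← Finset.sum_mul]
    have e2 : ∑ l ∈ range (m+1), recip w (m-l) * w l = dlt q m := cauchy_C2 hw m
    rw [e2, dlt]
    by_cases hm : m = 0
    · simp only [if_pos hm]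
      rw [Matrix.one_mul, mul_nonsing_inv _ hdet]
    · simp only [if_neg hm]
      rw [Matrix.zero_mul, Matrix.mul_zero]
  · intro m
    have e1 : ∀ l, (w (m-l) * (s 0)⁻¹) * (s 0 * recip w l)
        = w (m-l) * recip w l := by
      intro l
      rw [Matrix.mul_assoc, ← Matrix.mul_assoc ((s 0)⁻¹) (s 0) _,
        nonsing_inv_mul _ hdet, Matrix.one_mul]
    rw [cauchy]
    simp_rw [e1]
    exact cauchy_C1 hw m

lemma I1identity (α : ℝ) (n : ℕ) :
    hankelMat (schur1 (α:ℂ) s) n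
      = TLa (n+1) (fun m => s 0 * recip (shiftA (α:ℂ) s) m)
        * ((-(α:ℂ)) • hankelMat s n + hankelKMat s n)
        * blkM (n+1) (n+1)
            (fun b k => if b ≤ k then recip (shiftA (α:ℂ) s) (k-b) * s 0 else 0) := by
  have ht0 : IsUnit (shiftA (α:ℂ) s 0) := (shiftA_zero (α:ℂ) s).symm ▸ h0
  have hHα : (-(α:ℂ)) • hankelMat s n + hankelKMat s n
      = blkM (n+1) (n+1) (fun j k => shiftA (α:ℂ) s (j+k+1)) := by
    ext ⟨j, p⟩ ⟨k, p'⟩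
    simp [blkM, hankelMat, hankelKMat, shiftA_succ]
  rw [hHα, hankel_eq_blk, TLa, blkM_mul, blkM_mul]
  apply blkM_congr
  intro j k hj hk
  rw [sumB (show k < n+1 by omega) _ (fun b => recip (shiftA (α:ℂ) s) (k-b) * s 0)]
  have ha : ∀ b ∈ range (k+1),
      (∑ a ∈ range (n+1), (if a ≤ j then s 0 * recip (shiftA (α:ℂ) s) (j-a) else 0)
        * shiftA (α:ℂ) s (a+b+1)) * (recip (shiftA (α:ℂ) s) (k-b) * s 0)
      = ∑ a ∈ range (j+1), s 0 * recip (shiftA (α:ℂ) s) (j-a) * shiftA (α:ℂ) s (a+b+1)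
          * recip (shiftA (α:ℂ) s) (k-b) * s 0 := by
    intro b _
    rw [sumA (show j < n+1 by omega), Finset.sum_mul]
    exact Finset.sum_congr rfl fun a _ => by simp only [Matrix.mul_assoc]
  rw [Finset.sum_congr rfl ha, Finset.sum_comm]
  rw [u_eq, Gidentity ht0 j k, neg_mul, mul_neg, neg_neg, Finset.sum_mul, Finset.mul_sum]
  refine Finset.sum_congr rfl fun a _ => ?_
  rw [Finset.sum_mul, Finset.mul_sum]
  refine Finset.sum_congr rfl fun b _ => ?_
  simp only [Matrix.mul_assoc]

end bridge
variable {q : ℕ}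

lemma blkM_add (N M : ℕ) (f g : ℕ → ℕ → Matrix (Fin q) (Fin q) ℂ) :
    blkM N M f + blkM N M g = blkM N M (fun j k => f j k + g j k) := by
  ext ⟨j, p⟩ ⟨k, p'⟩
  simp [blkM]

lemma blkM_one (N : ℕ) :
    blkM N N (fun j k => if j = k then (1 : Matrix (Fin q) (Fin q) ℂ) else 0) = 1 := by
  ext ⟨j, p⟩ ⟨k, p'⟩
  rw [blkM, Matrix.of_apply, Matrix.one_apply]
  by_cases hjk : (j : ℕ) = (k : ℕ)
  · have : j = k := Fin.ext hjk
    subst this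
    rw [if_pos rfl]
    by_cases hp : p = p'
    · subst hp; simp [Matrix.one_apply]
    · simp [Matrix.one_apply, hp, Prod.ext_iff]
  · have hne : ((j, p) : Fin N × Fin q) ≠ (k, p') := by
      intro hcontra
      exact hjk (congrArg (fun z => ((z.1 : Fin N) : ℕ)) hcontra)
    rw [if_neg hne, if_neg hjk]
    rfl

section gmat
variable {s : ℕ → Matrix (Fin q) (Fin q) ℂ} (h0 : IsUnit (s 0))

noncomputable def nfun (s : ℕ → Matrix (Fin q) (Fin q) ℂ) : ℕ → ℕ → Matrix (Fin q) (Fin q) ℂ :=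
  fun a b => if a = 0 ∧ 1 ≤ b then -((s 0)⁻¹ * s b) else 0

noncomputable def gfun (s : ℕ → Matrix (Fin q) (Fin q) ℂ) : ℕ → ℕ → Matrix (Fin q) (Fin q) ℂ :=
  fun a b => (if a = b then 1 else 0) + nfun s a b

noncomputable def dfun (s : ℕ → Matrix (Fin q) (Fin q) ℂ) : ℕ → ℕ → Matrix (Fin q) (Fin q) ℂ :=
  fun a b => if a = 0 ∧ b = 0 then s 0
    else if 1 ≤ a ∧ 1 ≤ b then s (a+b) - s a * ((s 0)⁻¹ * s b) else 0

lemma Nm_sq (N : ℕ) : blkM N N (nfun s) * blkM N N (nfun s) = 0 := by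
  rw [blkM_mul]
  have : ∀ j k : ℕ, ∑ a ∈ range N, nfun s j a * nfun s a k = 0 := by
    intro j k
    refine Finset.sum_eq_zero fun a _ => ?_
    by_cases h1 : j = 0 ∧ 1 ≤ a
    · rw [nfun, nfun, if_neg (show ¬(a = 0 ∧ 1 ≤ k) by omega), Matrix.mul_zero]
    · rw [nfun, if_neg h1, Matrix.zero_mul]
  simp_rw [this]
  ext ⟨j, p⟩ ⟨k, p'⟩
  simp [blkM]

lemma Gm_eq (N : ℕ) : blkM N N (gfun s) = 1 + blkM N N (nfun s) := by
  rw [← blkM_one N, blkM_add]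
  rfl

lemma Gm_inv_left (N : ℕ) :
    (1 - blkM N N (nfun s)) * blkM N N (gfun s) = 1 := by
  rw [Gm_eq]
  have e : (1 - blkM N N (nfun s)) * (1 + blkM N N (nfun s))
      = 1 - blkM N N (nfun s) * blkM N N (nfun s) := by noncomm_ring
  rw [e, Nm_sq, sub_zero]

lemma Gm_inv_right (N : ℕ) :
    blkM N N (gfun s) * (1 - blkM N N (nfun s)) = 1 := by
  rw [Gm_eq]
  have e : (1 + blkM N N (nfun s)) * (1 - blkM N N (nfun s))
      = 1 - blkM N N (nfun s) * blkM N N (nfun s) := by noncomm_ring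
  rw [e, Nm_sq, sub_zero]

include h0

lemma I3identity (n : ℕ) (hH : ∀ j, j ≤ n+1 → (s j)ᴴ = s j) :
    (blkM (n+2) (n+2) (gfun s))ᴴ * hankelMat s (n+1) * blkM (n+2) (n+2) (gfun s)
      = blkM (n+2) (n+2) (dfun s) := by
  have hdet := (isUnit_iff_isUnit_det _).mp h0
  have hinvherm : ((s 0)⁻¹)ᴴ = (s 0)⁻¹ := by
    rw [conjTranspose_nonsing_inv, hH 0 (by omega)]
  rw [hankel_eq_blk, blkM_conjTranspose, Matrix.mul_assoc, blkM_mul, blkM_mul]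
  apply blkM_congr
  intro a b ha hb
  have hXfull : ∀ c, ∑ c' ∈ range (n+2), s (c+c') * gfun s c' b
      = s (c+b) + (if 1 ≤ b then -(s c * ((s 0)⁻¹ * s b)) else 0) := by
    intro c
    have e1 : ∀ c', s (c+c') * gfun s c' b
        = (if c' = b then s (c+c') else 0)
          + (if c' = 0 ∧ 1 ≤ b then -(s (c+c') * ((s 0)⁻¹ * s b)) else 0) := by
      intro c'
      rw [gfun, nfun, mul_add, mul_ite, Matrix.mul_one, Matrix.mul_zero,
        mul_ite, Matrix.mul_zero, mul_neg]
    simp_rw [e1]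
    rw [Finset.sum_add_distrib]
    congr 1
    · exact Finset.sum_eq_single b
        (fun c' _ hne => if_neg hne)
        (fun hmem => absurd (Finset.mem_range.mpr (by omega)) hmem)
        |>.trans (if_pos rfl)
    · rw [Finset.sum_eq_single 0
        (fun c' _ hne => if_neg (by omega))
        (fun hmem => absurd (Finset.mem_range.mpr (by omega)) hmem)]
      by_cases h1b : 1 ≤ b
      · rw [if_pos ⟨rfl, h1b⟩, if_pos h1b, Nat.add_zero]
      · rw [if_neg (by omega), if_neg h1b]
  have hgconj : ∀ c, c ≤ n+1 → (gfun s c a)ᴴ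
      = (if c = a then 1 else 0) + (if c = 0 ∧ 1 ≤ a then -(s a * (s 0)⁻¹) else 0) := by
    intro c hc
    rw [gfun, nfun, conjTranspose_add, apply_ite conjTranspose, conjTranspose_one,
      conjTranspose_zero, apply_ite conjTranspose, conjTranspose_neg, conjTranspose_mul,
      conjTranspose_zero, hinvherm]
    by_cases h1a : c = 0 ∧ 1 ≤ a
    · rw [if_pos h1a, if_pos h1a, hH a (by omega)]
    · rw [if_neg h1a, if_neg h1a]
  have houter : ∑ c ∈ range (n+2), (gfun s c a)ᴴ * (∑ c' ∈ range (n+2), s (c+c') * gfun s c' b)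
      = (s (a+b) + (if 1 ≤ b then -(s a * ((s 0)⁻¹ * s b)) else 0))
        + (if 1 ≤ a then -(s a * (s 0)⁻¹)
            * (s b + (if 1 ≤ b then -(s 0 * ((s 0)⁻¹ * s b)) else 0)) else 0) := by
    have e2 : ∀ c ∈ range (n+2), (gfun s c a)ᴴ * (∑ c' ∈ range (n+2), s (c+c') * gfun s c' b)
        = (if c = a then s (c+b) + (if 1 ≤ b then -(s c * ((s 0)⁻¹ * s b)) else 0) else 0)
          + (if c = 0 ∧ 1 ≤ a then -(s a * (s 0)⁻¹)
              * (s (c+b) + (if 1 ≤ b then -(s c * ((s 0)⁻¹ * s b)) else 0)) else 0) := by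
      intro c hc
      rw [Finset.mem_range] at hc
      rw [hgconj c (by omega), hXfull c, add_mul, ite_mul, Matrix.one_mul,
        Matrix.zero_mul, ite_mul, Matrix.zero_mul]
    rw [Finset.sum_congr rfl e2, Finset.sum_add_distrib]
    congr 1
    · exact Finset.sum_eq_single a
        (fun c _ hne => if_neg hne)
        (fun hmem => absurd (Finset.mem_range.mpr (by omega)) hmem)
        |>.trans (if_pos rfl)
    · rw [Finset.sum_eq_single 0
        (fun c _ hne => if_neg (by omega))
        (fun hmem => absurd (Finset.mem_range.mpr (by omega)) hmem)]
      by_cases h1a : 1 ≤ a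
      · rw [if_pos ⟨rfl, h1a⟩, if_pos h1a, Nat.zero_add]
      · rw [if_neg (by omega), if_neg h1a]
  rw [houter, dfun]
  have hcancel : s 0 * ((s 0)⁻¹ * s b) = s b := by
    rw [← Matrix.mul_assoc, mul_nonsing_inv _ hdet, Matrix.one_mul]
  have hcancel2 : s a * (s 0)⁻¹ * s 0 = s a := by
    rw [Matrix.mul_assoc, nonsing_inv_mul _ hdet, Matrix.mul_one]
  by_cases h1a : 1 ≤ a <;> by_cases h1b : 1 ≤ b
  · simp only [if_pos h1b, if_pos h1a, if_neg (show ¬(a = 0 ∧ b = 0) by omega),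
      if_pos (show 1 ≤ a ∧ 1 ≤ b from ⟨h1a, h1b⟩)]
    rw [hcancel, add_neg_cancel, Matrix.mul_zero, add_zero, sub_eq_add_neg]
  · obtain rfl : b = 0 := by omega
    simp only [if_neg h1b, if_pos h1a, if_neg (show ¬(a = 0 ∧ 0 = 0) by omega),
      if_neg (show ¬(1 ≤ a ∧ 1 ≤ 0) by omega), add_zero, Nat.add_zero, neg_mul]
    rw [hcancel2, add_neg_cancel]
    simp [show a ≠ 0 by omega]
  · obtain rfl : a = 0 := by omega
    simp only [if_pos h1b, if_neg h1a, if_neg (show ¬((0:ℕ) = 0 ∧ b = 0) by omega),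
      if_neg (show ¬(1 ≤ (0:ℕ) ∧ 1 ≤ b) by omega), add_zero, Nat.zero_add]
    rw [hcancel, add_neg_cancel]
    simp [show b ≠ 0 by omega]
  · obtain rfl : a = 0 := by omega
    obtain rfl : b = 0 := by omega
    simp

end gmat
variable {q : ℕ}

lemma Halpha_blk (α : ℝ) (w : ℕ → Matrix (Fin q) (Fin q) ℂ) (n : ℕ) :
    (-(α:ℂ)) • hankelMat w n + hankelKMat w n
      = blkM (n+1) (n+1) (fun j k => shiftA (α:ℂ) w (j+k+1)) := by
  ext ⟨j, p⟩ ⟨k, p'⟩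
  simp [blkM, hankelMat, hankelKMat, shiftA_succ]

lemma congr_inv {n' : Type*} [Fintype n'] [DecidableEq n'] {X P Pi : Matrix n' n' ℂ}
    (h1 : P * Pi = 1) (h2 : Pi * P = 1) : Pi * (P * X * Pᴴ) * Piᴴ = X := by
  calc Pi * (P * X * Pᴴ) * Piᴴ = (Pi * P) * (X * (Pᴴ * Piᴴ)) := by
        simp only [Matrix.mul_assoc]
  _ = X := by
      rw [← conjTranspose_mul, h2, conjTranspose_one, Matrix.mul_one, Matrix.one_mul]

lemma transfer_pd {n' : Type*} [Fintype n'] [DecidableEq n'] {X Y P Pi : Matrix n' n' ℂ}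
    (h1 : P * Pi = 1) (h2 : Pi * P = 1) (hXY : Y = P * X * Pᴴ) :
    X.PosDef ↔ Y.PosDef := by
  constructor
  · intro hX
    rw [hXY]
    exact posDef_conj hX h1 h2
  · intro hY
    have : X = Pi * Y * Piᴴ := by rw [hXY, congr_inv h1 h2]
    rw [this]
    exact posDef_conj hY h2 h1

lemma transfer_psd {n' : Type*} [Fintype n'] [DecidableEq n'] {X Y P Pi : Matrix n' n' ℂ}
    (h1 : P * Pi = 1) (h2 : Pi * P = 1) (hXY : Y = P * X * Pᴴ) :
    X.PosSemidef ↔ Y.PosSemidef := by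
  constructor
  · intro hX
    rw [hXY]
    exact hX.mul_mul_conjTranspose_same P
  · intro hY
    have : X = Pi * Y * Piᴴ := by rw [hXY, congr_inv h1 h2]
    rw [this]
    exact hY.mul_mul_conjTranspose_same Pi

section bridge2
variable {s : ℕ → Matrix (Fin q) (Fin q) ℂ} (h0 : IsUnit (s 0))
include h0

lemma shiftAu (α : ℝ) (m : ℕ) :
    shiftA (α:ℂ) (schur1 (α:ℂ) s) (m+1) = -(s 0 * (recip s (m+2) * s 0)) := by
  rw [shiftA_succ, u_eq, u_eq,
    (show recip s (m+2) = recip (shiftA (α:ℂ) s) (m+2)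
        - (α:ℂ) • recip (shiftA (α:ℂ) s) (m+1) from (recip_shiftA h0 ((α:ℂ))).2 (m+1)),
    sub_mul, smul_mul_assoc, mul_sub, mul_smul_comm, neg_smul, smul_neg, neg_neg,
    neg_sub, sub_eq_add_neg]

lemma AconjT {w : ℕ → Matrix (Fin q) (Fin q) ℂ} (hw0 : w 0 = s 0) (n : ℕ)
    (hs0h : (s 0)ᴴ = s 0) (hwh : ∀ m, m ≤ n → (w m)ᴴ = w m) :
    (TLa (n+1) (fun m => s 0 * recip w m))ᴴ
      = blkM (n+1) (n+1) (fun b k => if b ≤ k then recip w (k-b) * s 0 else 0) := by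
  have hw : IsUnit (w 0) := hw0 ▸ h0
  have hrh : ∀ m, m ≤ n → (recip w m)ᴴ = recip w m := by
    have := recip_herm hw (J := n) (fun j hj => by
      rcases Nat.eq_zero_or_pos j with h | h
      · subst h; rw [hw0, hs0h]
      · exact hwh j hj)
    exact this
  rw [TLa_conjTranspose]
  apply blkM_congr
  intro b k _ hk
  by_cases hbk : b ≤ k
  · rw [if_pos hbk, if_pos hbk, conjTranspose_mul, hs0h, hrh (k-b) (by omega)]
  · rw [if_neg hbk, if_neg hbk]

lemma I2identity (α : ℝ) (n : ℕ) :
    (-(α:ℂ)) • hankelMat (schur1 (α:ℂ) s) n + hankelKMat (schur1 (α:ℂ) s) n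
      = TLa (n+1) (fun m => s 0 * recip s m)
        * blkM (n+1) (n+1) (fun a b => s (a+b+2) - s (a+1) * ((s 0)⁻¹ * s (b+1)))
        * blkM (n+1) (n+1) (fun b k => if b ≤ k then recip s (k-b) * s 0 else 0) := by
  rw [Halpha_blk, TLa, blkM_mul, blkM_mul]
  apply blkM_congr
  intro j k hj hk
  rw [sumB (show k < n+1 by omega) _ (fun b => recip s (k-b) * s 0)]
  have ha : ∀ b ∈ range (k+1),
      (∑ a ∈ range (n+1), (if a ≤ j then s 0 * recip s (j-a) else 0)
        * (s (a+b+2) - s (a+1) * ((s 0)⁻¹ * s (b+1)))) * (recip s (k-b) * s 0)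
      = ∑ a ∈ range (j+1), s 0 * recip s (j-a)
          * (s (a+b+2) - s (a+1) * (s 0)⁻¹ * s (b+1)) * recip s (k-b) * s 0 := by
    intro b _
    rw [sumA (show j < n+1 by omega), Finset.sum_mul]
    refine Finset.sum_congr rfl fun a _ => ?_
    simp only [Matrix.mul_assoc, mul_sub, sub_mul]
  rw [Finset.sum_congr rfl ha, Finset.sum_comm]
  have hG3' : recip s (j+k+2) = -∑ a ∈ range (j+1), ∑ b ∈ range (k+1),
      recip s (j-a) * (s (a+b+2) - s (a+1) * (s 0)⁻¹ * s (b+1)) * recip s (k-b) := by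
    rw [← G3identity h0 j k, neg_neg]
  rw [shiftAu h0 α (j+k), hG3', neg_mul, mul_neg, neg_neg, Finset.sum_mul, Finset.mul_sum]
  refine Finset.sum_congr rfl fun a _ => ?_
  rw [Finset.sum_mul, Finset.mul_sum]
  refine Finset.sum_congr rfl fun b _ => ?_
  simp only [Matrix.mul_assoc, mul_sub, sub_mul]

end bridge2
variable {q : ℕ}

def vy0 {N : ℕ} (y : Fin (N+1) × Fin q → ℂ) : Fin q → ℂ := fun p => y (0, p)
def vy1 {N : ℕ} (y : Fin (N+1) × Fin q → ℂ) : Fin N × Fin q → ℂ :=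
  fun ap => y (ap.1.succ, ap.2)
def extd {N : ℕ} (x : Fin N × Fin q → ℂ) : Fin (N+1) × Fin q → ℂ :=
  fun ap => Fin.cases 0 (fun a' => x (a', ap.2)) ap.1

lemma expand_form {K : ℕ} (M : Matrix (Fin K × Fin q) (Fin K × Fin q) ℂ)
    (z : Fin K × Fin q → ℂ) :
    star z ⬝ᵥ M *ᵥ z = ∑ a : Fin K, ∑ p : Fin q, star (z (a,p))
      * ∑ b : Fin K, ∑ p' : Fin q, M (a,p) (b,p') * z (b,p') := by
  rw [dotProduct, Fintype.sum_prod_type]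
  refine Finset.sum_congr rfl fun a _ => Finset.sum_congr rfl fun p _ => ?_
  rw [Pi.star_apply, Matrix.mulVec, dotProduct, Fintype.sum_prod_type]

lemma expand_form_q (A : Matrix (Fin q) (Fin q) ℂ) (v : Fin q → ℂ) :
    star v ⬝ᵥ A *ᵥ v = ∑ p : Fin q, star (v p) * ∑ p' : Fin q, A p p' * v p' := by
  rw [dotProduct]
  refine Finset.sum_congr rfl fun p _ => ?_
  rw [Pi.star_apply, Matrix.mulVec, dotProduct]

lemma split_form (N : ℕ) (f : ℕ → ℕ → Matrix (Fin q) (Fin q) ℂ)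
    (hf0 : ∀ b, 1 ≤ b → f 0 b = 0) (hf0' : ∀ a, 1 ≤ a → f a 0 = 0)
    (y : Fin (N+1) × Fin q → ℂ) :
    star y ⬝ᵥ (blkM (N+1) (N+1) f) *ᵥ y
      = star (vy0 y) ⬝ᵥ (f 0 0) *ᵥ (vy0 y)
        + star (vy1 y) ⬝ᵥ (blkM N N (fun a b => f (a+1) (b+1))) *ᵥ (vy1 y) := by
  rw [expand_form, expand_form_q, expand_form, Fin.sum_univ_succ]
  congr 1
  · refine Finset.sum_congr rfl fun p _ => ?_
    congr 1
    rw [Fin.sum_univ_succ]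
    have hz : ∑ b : Fin N, ∑ p' : Fin q,
        (blkM (N+1) (N+1) f) (0,p) (b.succ,p') * y (b.succ,p') = 0 := by
      refine Finset.sum_eq_zero fun b _ => Finset.sum_eq_zero fun p' _ => ?_
      show f 0 (b.val+1) p p' * _ = 0
      rw [hf0 (b.val+1) (by omega), Matrix.zero_apply, zero_mul]
    rw [hz, add_zero]
    rfl
  · refine Finset.sum_congr rfl fun a _ => Finset.sum_congr rfl fun p _ => ?_
    congr 1
    rw [Fin.sum_univ_succ]
    have hz : ∑ p' : Fin q,
        (blkM (N+1) (N+1) f) (a.succ,p) (0,p') * y (0,p') = 0 := by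
      refine Finset.sum_eq_zero fun p' _ => ?_
      show f (a.val+1) 0 p p' * _ = 0
      rw [hf0' (a.val+1) (by omega), Matrix.zero_apply, zero_mul]
    rw [hz, zero_add]
    rfl

noncomputable def DltM (s : ℕ → Matrix (Fin q) (Fin q) ℂ) (n : ℕ) :
    Matrix (Fin (n+1) × Fin q) (Fin (n+1) × Fin q) ℂ :=
  blkM (n+1) (n+1) (fun a b => s (a+b+2) - s (a+1) * ((s 0)⁻¹ * s (b+1)))

def emb (n : ℕ) : Fin (n+1) × Fin q → Fin (n+2) × Fin q := fun ap => (ap.1.succ, ap.2)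

lemma dfun_zero_row (s : ℕ → Matrix (Fin q) (Fin q) ℂ) :
    ∀ b, 1 ≤ b → dfun s 0 b = 0 := by
  intro b hb
  rw [dfun, if_neg (by omega), if_neg (by omega)]

lemma dfun_zero_col (s : ℕ → Matrix (Fin q) (Fin q) ℂ) :
    ∀ a, 1 ≤ a → dfun s a 0 = 0 := by
  intro a ha
  rw [dfun, if_neg (by omega), if_neg (by omega)]

lemma dfun00 (s : ℕ → Matrix (Fin q) (Fin q) ℂ) : dfun s 0 0 = s 0 := by
  rw [dfun, if_pos ⟨rfl, rfl⟩]

lemma dfun_succ_blk (s : ℕ → Matrix (Fin q) (Fin q) ℂ) (n : ℕ) :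
    blkM (n+1) (n+1) (fun a b => dfun s (a+1) (b+1)) = DltM s n := by
  apply blkM_congr
  intro a b _ _
  rw [dfun, if_neg (by omega), if_pos ⟨by omega, by omega⟩,
    show (a+1)+(b+1) = a+b+2 by omega]

lemma Dlt_submatrix (s : ℕ → Matrix (Fin q) (Fin q) ℂ) (n : ℕ) :
    (blkM (n+2) (n+2) (dfun s)).submatrix (emb n) (emb n) = DltM s n := by
  rw [← dfun_succ_blk]
  ext ⟨a, p⟩ ⟨b, p'⟩
  rfl

lemma vy_zero_iff {N : ℕ} (y : Fin (N+1) × Fin q → ℂ)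
    (h0 : vy0 y = 0) (h1 : vy1 y = 0) : y = 0 := by
  funext ap
  obtain ⟨a, p⟩ := ap
  refine Fin.cases (congrFun h0 p) (fun a' => congrFun h1 (a', p)) a

lemma vy0_extd {N : ℕ} (x : Fin N × Fin q → ℂ) : vy0 (extd x) = 0 := by
  funext p; rfl

lemma vy1_extd {N : ℕ} (x : Fin N × Fin q → ℂ) : vy1 (extd x) = x := by
  funext ap
  obtain ⟨a, p⟩ := ap
  show (Fin.cases 0 (fun a' => x (a', p)) a.succ : ℂ) = x (a, p)
  rw [Fin.cases_succ]

lemma extd_ne_zero {N : ℕ} {x : Fin N × Fin q → ℂ} (hx : x ≠ 0) : extd x ≠ 0 := by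
  intro hc
  apply hx
  rw [← vy1_extd x, hc]
  funext ap; rfl

lemma Dm_posdef {s : ℕ → Matrix (Fin q) (Fin q) ℂ} {n : ℕ}
    (hs0 : (s 0).PosDef) (hDlt : (DltM s n).PosDef)
    (hherm : (blkM (n+2) (n+2) (dfun s)).IsHermitian) :
    (blkM (n+2) (n+2) (dfun s)).PosDef := by
  refine Matrix.PosDef.of_dotProduct_mulVec_pos hherm (fun ⦃y⦄ hy => ?_)
  rw [split_form (n+1) (dfun s) (dfun_zero_row s) (dfun_zero_col s) y,
    dfun00, dfun_succ_blk]
  by_cases hy0 : vy0 y = 0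
  · have hy1 : vy1 y ≠ 0 := fun hc => hy (vy_zero_iff y hy0 hc)
    rw [hy0, star_zero, Matrix.mulVec_zero, dotProduct_zero, zero_add]
    exact hDlt.dotProduct_mulVec_pos hy1
  · exact add_pos_of_pos_of_nonneg (hs0.dotProduct_mulVec_pos hy0) (hDlt.posSemidef.dotProduct_mulVec_nonneg _)

lemma Dlt_posdef_of_Dm {s : ℕ → Matrix (Fin q) (Fin q) ℂ} {n : ℕ}
    (hDm : (blkM (n+2) (n+2) (dfun s)).PosDef) : (DltM s n).PosDef := by
  refine Matrix.PosDef.of_dotProduct_mulVec_pos ?_ ?_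
  · rw [← Dlt_submatrix]
    exact hDm.1.submatrix (emb n)
  · intro x hx
    have key := split_form (n+1) (dfun s) (dfun_zero_row s) (dfun_zero_col s) (extd x)
    rw [dfun00, dfun_succ_blk, vy0_extd, vy1_extd] at key
    have h2 : star (0 : Fin q → ℂ) ⬝ᵥ (s 0) *ᵥ (0 : Fin q → ℂ) = 0 := by
      rw [star_zero, zero_dotProduct]
    rw [h2, zero_add] at key
    rw [← key]
    exact hDm.dotProduct_mulVec_pos (extd_ne_zero hx)

lemma Dlt_psd_of_Dm {s : ℕ → Matrix (Fin q) (Fin q) ℂ} {n : ℕ}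
    (hDm : (blkM (n+2) (n+2) (dfun s)).PosSemidef) : (DltM s n).PosSemidef := by
  rw [← Dlt_submatrix]
  exact hDm.submatrix (emb n)

def e2 : Fin 1 × Fin q ≃ Fin q where
  toFun := Prod.snd
  invFun := fun p => (0, p)
  left_inv := fun ⟨a, p⟩ => by
    have : a = 0 := Subsingleton.elim a 0
    rw [this]
  right_inv := fun p => rfl

lemma H0_eq (s : ℕ → Matrix (Fin q) (Fin q) ℂ) :
    hankelMat s 0 = (s 0).submatrix (e2 : Fin 1 × Fin q ≃ Fin q) e2 := by
  ext ⟨a, p⟩ ⟨b, p'⟩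
  show s (a.val + b.val) p p' = s 0 p p'
  rw [Fin.val_eq_zero a, Fin.val_eq_zero b]

lemma H0_pd_iff (s : ℕ → Matrix (Fin q) (Fin q) ℂ) :
    (hankelMat s 0).PosDef ↔ (s 0).PosDef := by
  constructor
  · intro h
    have h2 := posDef_submatrix_equiv h (e2 : Fin 1 × Fin q ≃ Fin q).symm
    have e : (hankelMat s 0).submatrix (e2 (q := q)).symm e2.symm = s 0 := by
      ext p p'
      show s _ p p' = s 0 p p'
      rfl
    rwa [e] at h2
  · intro h
    rw [H0_eq]
    exact posDef_submatrix_equiv h e2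

lemma H0_psd_s0 {s : ℕ → Matrix (Fin q) (Fin q) ℂ}
    (h : (hankelMat s 0).PosSemidef) : (s 0).PosSemidef := by
  have h2 := h.submatrix (e2 (q := q)).symm
  have e : (hankelMat s 0).submatrix (e2 (q := q)).symm e2.symm = s 0 := by
    ext p p'
    show s _ p p' = s 0 p p'
    rfl
  rwa [e] at h2

variable {q : ℕ}

section kb
variable {s : ℕ → Matrix (Fin q) (Fin q) ℂ} {α : ℝ}

lemma herm_even {m : ℕ} (h : (hankelMat s m).PosSemidef) : (s (m+m))ᴴ = s (m+m) := by
  ext p p'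
  have h1 := Matrix.ext_iff.mpr h.1 ((⟨m, Nat.lt_succ_self m⟩ : Fin (m+1)), p)
    ((⟨m, Nat.lt_succ_self m⟩ : Fin (m+1)), p')
  rw [Matrix.conjTranspose_apply] at h1
  rw [Matrix.conjTranspose_apply]
  exact h1

lemma herm_odd {m : ℕ}
    (h : ((-(α:ℂ)) • hankelMat s m + hankelKMat s m).PosSemidef)
    (heven : (s (m+m))ᴴ = s (m+m)) : (s (m+m+1))ᴴ = s (m+m+1) := by
  ext p p'
  have h1 := Matrix.ext_iff.mpr h.1 ((⟨m, Nat.lt_succ_self m⟩ : Fin (m+1)), p)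
    ((⟨m, Nat.lt_succ_self m⟩ : Fin (m+1)), p')
  rw [Matrix.conjTranspose_apply] at h1
  have e : ∀ (p₁ p₂ : Fin q),
      ((-(α:ℂ)) • hankelMat s m + hankelKMat s m) ((⟨m, Nat.lt_succ_self m⟩ : Fin (m+1)), p₁)
        ((⟨m, Nat.lt_succ_self m⟩ : Fin (m+1)), p₂)
      = (-(α:ℂ)) * s (m+m) p₁ p₂ + s (m+m+1) p₁ p₂ := by
    intro p₁ p₂
    rfl
  rw [e, e] at h1
  rw [star_add, star_mul', star_neg,
    (show star ((α:ℂ)) = (α:ℂ) from Complex.conj_ofReal α)] at h1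
  have hev : star (s (m + m) p' p) = s (m + m) p p' := by
    have h2 := Matrix.ext_iff.mpr heven p p'
    rw [Matrix.conjTranspose_apply] at h2
    exact h2
  rw [hev] at h1
  rw [Matrix.conjTranspose_apply]
  exact add_left_cancel h1

lemma herm_of_Kgg {κ : ℕ} (hs : Kgg α (κ : ℕ∞) s) : ∀ j, j ≤ κ → (s j)ᴴ = s j := by
  intro j hj
  rcases Nat.even_or_odd j with ⟨m, hm⟩ | ⟨m, hm⟩
  · subst hm
    exact herm_even (hs.1 m (by exact_mod_cast (by omega : 2*m ≤ κ)))
  · have hj' : j = m + m + 1 := by omega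
    subst hj'
    exact herm_odd (hs.2 m (by exact_mod_cast (by omega : 2*m+1 ≤ κ)))
      (herm_even (hs.1 m (by exact_mod_cast (by omega : 2*m ≤ κ))))

lemma t_herm {J : ℕ} (hh : ∀ j, j ≤ J → (s j)ᴴ = s j) :
    ∀ m, m ≤ J → (shiftA (α:ℂ) s m)ᴴ = shiftA (α:ℂ) s m := by
  intro m hm
  match m with
  | 0 => rw [shiftA_zero]; exact hh 0 (by omega)
  | (m+1) =>
    rw [shiftA_succ, conjTranspose_add, Matrix.conjTranspose_smul,
      hh m (by omega), hh (m+1) hm, star_neg]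
    congr 1
    rw [show star ((α:ℂ)) = (α:ℂ) from Complex.conj_ofReal α]

variable (h0 : IsUnit (s 0))
include h0

lemma pairA (α : ℝ) (N : ℕ) :
    TLa N (fun m => s 0 * recip (shiftA (α:ℂ) s) m)
      * TLa N (fun m => shiftA (α:ℂ) s m * (s 0)⁻¹) = 1 ∧
    TLa N (fun m => shiftA (α:ℂ) s m * (s 0)⁻¹)
      * TLa N (fun m => s 0 * recip (shiftA (α:ℂ) s) m) = 1 :=
  ⟨TL_mul_eq_one (cauchy_pair h0 (shiftA_zero (α:ℂ) s)).1,
   TL_mul_eq_one (cauchy_pair h0 (shiftA_zero (α:ℂ) s)).2⟩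

lemma pairM (N : ℕ) :
    TLa N (fun m => s 0 * recip s m) * TLa N (fun m => s m * (s 0)⁻¹) = 1 ∧
    TLa N (fun m => s m * (s 0)⁻¹) * TLa N (fun m => s 0 * recip s m) = 1 :=
  ⟨TL_mul_eq_one (cauchy_pair h0 rfl).1, TL_mul_eq_one (cauchy_pair h0 rfl).2⟩

lemma I1bridge (α : ℝ) (n : ℕ) (hh : ∀ j, j ≤ n → (s j)ᴴ = s j) :
    ((((-(α:ℂ)) • hankelMat s n + hankelKMat s n).PosDef
        ↔ (hankelMat (schur1 (α:ℂ) s) n).PosDef) ∧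
     (((-(α:ℂ)) • hankelMat s n + hankelKMat s n).PosSemidef
        ↔ (hankelMat (schur1 (α:ℂ) s) n).PosSemidef)) := by
  have hAconj := AconjT h0 (shiftA_zero (α:ℂ) s) n (hh 0 (by omega))
    (fun m hm => t_herm hh m (by omega))
  have hid : hankelMat (schur1 (α:ℂ) s) n
      = TLa (n+1) (fun m => s 0 * recip (shiftA (α:ℂ) s) m)
        * ((-(α:ℂ)) • hankelMat s n + hankelKMat s n)
        * (TLa (n+1) (fun m => s 0 * recip (shiftA (α:ℂ) s) m))ᴴ := by
    rw [I1identity h0 α n, hAconj]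
  exact ⟨transfer_pd (pairA h0 α (n+1)).1 (pairA h0 α (n+1)).2 hid,
    transfer_psd (pairA h0 α (n+1)).1 (pairA h0 α (n+1)).2 hid⟩

lemma I2bridge (α : ℝ) (n : ℕ) (hh : ∀ j, j ≤ n → (s j)ᴴ = s j) :
    (((DltM s n).PosDef
        ↔ ((-(α:ℂ)) • hankelMat (schur1 (α:ℂ) s) n
            + hankelKMat (schur1 (α:ℂ) s) n).PosDef) ∧
     ((DltM s n).PosSemidef
        ↔ ((-(α:ℂ)) • hankelMat (schur1 (α:ℂ) s) n
            + hankelKMat (schur1 (α:ℂ) s) n).PosSemidef)) := by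
  have hAconj := AconjT h0 rfl n (hh 0 (by omega)) hh
  have hid : (-(α:ℂ)) • hankelMat (schur1 (α:ℂ) s) n + hankelKMat (schur1 (α:ℂ) s) n
      = TLa (n+1) (fun m => s 0 * recip s m) * DltM s n
        * (TLa (n+1) (fun m => s 0 * recip s m))ᴴ := by
    rw [I2identity h0 α n, hAconj]
    rfl
  exact ⟨transfer_pd (pairM h0 (n+1)).1 (pairM h0 (n+1)).2 hid,
    transfer_psd (pairM h0 (n+1)).1 (pairM h0 (n+1)).2 hid⟩

lemma I3bridge (n : ℕ) (hh : ∀ j, j ≤ n+1 → (s j)ᴴ = s j) :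
    ((hankelMat s (n+1)).PosDef ↔ (blkM (n+2) (n+2) (dfun s)).PosDef) ∧
    ((hankelMat s (n+1)).PosSemidef ↔ (blkM (n+2) (n+2) (dfun s)).PosSemidef) := by
  have hG1 : (blkM (n+2) (n+2) (gfun s))ᴴ * (1 - blkM (n+2) (n+2) (nfun s))ᴴ = 1 := by
    rw [← conjTranspose_mul, Gm_inv_left, conjTranspose_one]
  have hG2 : (1 - blkM (n+2) (n+2) (nfun s))ᴴ * (blkM (n+2) (n+2) (gfun s))ᴴ = 1 := by
    rw [← conjTranspose_mul, Gm_inv_right, conjTranspose_one]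
  have hid : blkM (n+2) (n+2) (dfun s)
      = (blkM (n+2) (n+2) (gfun s))ᴴ * hankelMat s (n+1)
        * ((blkM (n+2) (n+2) (gfun s))ᴴ)ᴴ := by
    rw [conjTranspose_conjTranspose, I3identity h0 n hh]
  exact ⟨transfer_pd hG1 hG2 hid, transfer_psd hG1 hG2 hid⟩

lemma KB1 {κ : ℕ} (hs : Kgg α ((κ+1 : ℕ) : ℕ∞) s) :
    Kgg α (κ : ℕ∞) (schur1 (α:ℂ) s) := by
  have hherm := herm_of_Kgg (κ := κ+1) hs
  constructor
  · intro n hn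
    have hn' : 2*n ≤ κ := by exact_mod_cast hn
    have hHα := hs.2 n (by exact_mod_cast (by omega : 2*n+1 ≤ κ+1))
    exact ((I1bridge h0 α n (fun j hj => hherm j (by omega))).2).mp hHα
  · intro n hn
    have hn' : 2*n+1 ≤ κ := by exact_mod_cast hn
    have hH := hs.1 (n+1) (by exact_mod_cast (by omega : 2*(n+1) ≤ κ+1))
    have hDm := ((I3bridge h0 n (fun j hj => hherm j (by omega))).2).mp hH
    have hDlt := Dlt_psd_of_Dm hDm
    exact ((I2bridge h0 α n (fun j hj => hherm j (by omega))).2).mp hDlt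

lemma KB2 {κ : ℕ} (hs : Kgg α ((κ+1 : ℕ) : ℕ∞) s) :
    Kgt α ((κ+1 : ℕ) : ℕ∞) s ↔ Kgt α (κ : ℕ∞) (schur1 (α:ℂ) s) := by
  have hherm := herm_of_Kgg (κ := κ+1) hs
  have hs0pd : (s 0).PosDef :=
    posDef_of_posSemidef_isUnit
      (H0_psd_s0 (hs.1 0 (by exact_mod_cast (by omega : 2*0 ≤ κ+1)))) h0
  constructor
  · intro hKgt
    constructor
    · intro n hn
      have hn' : 2*n ≤ κ := by exact_mod_cast hn
      have hHα := hKgt.2 n (by exact_mod_cast (by omega : 2*n+1 ≤ κ+1))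
      exact ((I1bridge h0 α n (fun j hj => hherm j (by omega))).1).mp hHα
    · intro n hn
      have hn' : 2*n+1 ≤ κ := by exact_mod_cast hn
      have hH := hKgt.1 (n+1) (by exact_mod_cast (by omega : 2*(n+1) ≤ κ+1))
      have hDm := ((I3bridge h0 n (fun j hj => hherm j (by omega))).1).mp hH
      have hDlt := Dlt_posdef_of_Dm hDm
      exact ((I2bridge h0 α n (fun j hj => hherm j (by omega))).1).mp hDlt
  · intro hKgt'
    constructor
    · intro n hn
      have hn' : 2*n ≤ κ+1 := by exact_mod_cast hn
      match n with
      | 0 => exact (H0_pd_iff s).mpr hs0pd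
      | (m+1) =>
        have hm' : 2*m+1 ≤ κ := by omega
        have hHαu := hKgt'.2 m (by exact_mod_cast hm')
        have hDlt := ((I2bridge h0 α m (fun j hj => hherm j (by omega))).1).mpr hHαu
        have hDmpsd : (blkM (m+2) (m+2) (dfun s)).PosSemidef :=
          ((I3bridge h0 m (fun j hj => hherm j (by omega))).2).mp
            (hs.1 (m+1) (by exact_mod_cast (by omega : 2*(m+1) ≤ κ+1)))
        have hDm := Dm_posdef hs0pd hDlt hDmpsd.1
        exact ((I3bridge h0 m (fun j hj => hherm j (by omega))).1).mpr hDm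
    · intro n hn
      have hn' : 2*n+1 ≤ κ+1 := by exact_mod_cast hn
      have hHu := hKgt'.1 n (by exact_mod_cast (by omega : 2*n ≤ κ))
      exact ((I1bridge h0 α n (fun j hj => hherm j (by omega))).1).mpr hHu

end kb
variable {q : ℕ}

lemma mainFin (α : ℝ) : ∀ (κ : ℕ) (s : ℕ → Matrix (Fin q) (Fin q) ℂ),
    Kgg α (κ : ℕ∞) s →
    ((Kgt α (κ : ℕ∞) s ↔ ∀ k : ℕ, k ≤ κ → IsUnit ((schur1 (α:ℂ))^[k] s 0)) ∧
     (Kgt α (κ : ℕ∞) s → ∀ k : ℕ, k ≤ κ → ((schur1 (α:ℂ))^[k] s 0).PosDef)) := by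
  intro κ
  induction κ with
  | zero =>
    intro s hs
    have hpsd0 : (s 0).PosSemidef :=
      H0_psd_s0 (hs.1 0 (by exact_mod_cast (by omega : 2*0 ≤ 0)))
    have hforward : Kgt α ((0:ℕ) : ℕ∞) s → (s 0).PosDef := fun hKgt =>
      (H0_pd_iff s).mp (hKgt.1 0 (by exact_mod_cast (by omega : 2*0 ≤ 0)))
    refine ⟨⟨fun hKgt k hk => ?_, fun hU => ⟨fun n hn => ?_, fun n hn => ?_⟩⟩,
      fun hKgt k hk => ?_⟩
    · have hk0 : k = 0 := by omega
      subst hk0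
      simpa using (hforward hKgt).isUnit
    · have hn' : 2*n ≤ 0 := by exact_mod_cast hn
      have hn0 : n = 0 := by omega
      subst hn0
      refine (H0_pd_iff s).mpr (posDef_of_posSemidef_isUnit hpsd0 ?_)
      simpa using hU 0 (le_refl 0)
    · exfalso
      have hn' : 2*n+1 ≤ 0 := by exact_mod_cast hn
      omega
    · have hk0 : k = 0 := by omega
      subst hk0
      simpa using hforward hKgt
  | succ κ IH =>
    intro s hs
    have main_forward : Kgt α ((κ+1 : ℕ) : ℕ∞) s →
        (∀ k ≤ κ+1, IsUnit ((schur1 (α:ℂ))^[k] s 0)) ∧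
        (∀ k ≤ κ+1, ((schur1 (α:ℂ))^[k] s 0).PosDef) := by
      intro hKgt
      have hpd0 : (s 0).PosDef :=
        (H0_pd_iff s).mp (hKgt.1 0 (by exact_mod_cast (by omega : 2*0 ≤ κ+1)))
      have h0 : IsUnit (s 0) := hpd0.isUnit
      have hKggu := KB1 h0 hs
      have hKgtu := (KB2 h0 hs).mp hKgt
      have IHu := IH (schur1 (α:ℂ) s) hKggu
      have hUu := (IHu.1).mp hKgtu
      have hPu := IHu.2 hKgtu
      constructor
      · intro k hk
        match k with
        | 0 => simpa using h0
        | (k+1) =>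
          rw [Function.iterate_succ_apply]
          exact hUu k (by omega)
      · intro k hk
        match k with
        | 0 => simpa using hpd0
        | (k+1) =>
          rw [Function.iterate_succ_apply]
          exact hPu k (by omega)
    refine ⟨⟨fun hKgt => (main_forward hKgt).1, fun hU => ?_⟩,
      fun hKgt => (main_forward hKgt).2⟩
    have h0 : IsUnit (s 0) := by simpa using hU 0 (by omega)
    have hKggu := KB1 h0 hs
    have IHu := IH (schur1 (α:ℂ) s) hKggu
    have hUu : ∀ k ≤ κ, IsUnit ((schur1 (α:ℂ))^[k] (schur1 (α:ℂ) s) 0) := by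
      intro k hk
      have := hU (k+1) (by omega)
      rwa [Function.iterate_succ_apply] at this
    exact (KB2 h0 hs).mpr ((IHu.1).mpr hUu)

end P96


/-- Proposition 9.6: an α-Stieltjes right-nonnegative definite sequence is
    α-Stieltjes right-positive definite iff all matrices s_0^{[k,α]} are nonsingular;
    in that case they are positive Hermitian. -/
theorem stmt15 {q : ℕ} (α : ℝ) (κ : ℕ∞)
    (s : ℕ → Matrix (Fin q) (Fin q) ℂ) (hs : Kgg α κ s) :
    (Kgt α κ s ↔ ∀ k : ℕ, (k : ℕ∞) ≤ κ → IsUnit ((schur1 (α : ℂ))^[k] s 0)) ∧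
    (Kgt α κ s → ∀ k : ℕ, (k : ℕ∞) ≤ κ → ((schur1 (α : ℂ))^[k] s 0).PosDef) := by
  induction κ using ENat.recTopCoe with
  | top =>
    have hrestrict : ∀ m : ℕ, Kgg α (m : ℕ∞) s :=
      fun m => ⟨fun n _ => hs.1 n le_top, fun n _ => hs.2 n le_top⟩
    constructor
    · constructor
      · intro hKgt k _
        have hKgtk : Kgt α (k : ℕ∞) s :=
          ⟨fun n _ => hKgt.1 n le_top, fun n _ => hKgt.2 n le_top⟩
        exact ((P96.mainFin α k s (hrestrict k)).1.mp hKgtk) k (le_refl k)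
      · intro hU
        constructor
        · intro n _
          have hKgtk : Kgt α ((2*n : ℕ) : ℕ∞) s :=
            (P96.mainFin α (2*n) s (hrestrict (2*n))).1.mpr (fun k _ => hU k le_top)
          exact hKgtk.1 n (by exact_mod_cast le_refl (2*n))
        · intro n _
          have hKgtk : Kgt α ((2*n+1 : ℕ) : ℕ∞) s :=
            (P96.mainFin α (2*n+1) s (hrestrict (2*n+1))).1.mpr (fun k _ => hU k le_top)
          exact hKgtk.2 n (by exact_mod_cast le_refl (2*n+1))
    · intro hKgt k _
      have hKgtk : Kgt α (k : ℕ∞) s :=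
        ⟨fun n _ => hKgt.1 n le_top, fun n _ => hKgt.2 n le_top⟩
      exact (P96.mainFin α k s (hrestrict k)).2 hKgtk k (le_refl k)
  | coe κ' =>
    have hm := P96.mainFin α κ' s hs
    refine ⟨⟨fun h k hk => hm.1.mp h k (by exact_mod_cast hk),
      fun hU => hm.1.mpr (fun k hk => hU k (by exact_mod_cast hk))⟩,
      fun h k hk => hm.2 h k (by exact_mod_cast hk)⟩
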